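/- Let A be a filter space with accumulation point a. A topological space X belongs to CH({A}) if and only if for every subset M ⊆ X the closure of M equals M̃, the transfinite A-closure of M. -/

import Mathlib

universe u v

/-- A class of topological spaces (in universe `u`): a predicate on spaces. -/
abbrev TopClass : Type (u + 1) := (X : Type u) → TopologicalSpace X → Prop

/-- A class of topological spaces is coreflective if it is closed under the formation of
topological sums and quotient spaces. -/
def IsCoreflective (C : TopClass.{u}) : Prop :=
  (∀ (ι : Type u) (X : ι → Type u) (t : (i : ι) → TopologicalSpace (X i)),
      (∀ i, C (X i) (t i)) → C ((i : ι) × X i) (@instTopologicalSpaceSigma ι X t)) ∧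
  (∀ (X Y : Type u) (tX : TopologicalSpace X) (tY : TopologicalSpace Y) (f : X → Y),
      @Topology.IsQuotientMap X Y tX tY f → C X tX → C Y tY)

/-- The coreflective hull of a class of spaces: the smallest coreflective class containing it. -/
def CH (A : TopClass.{u}) : TopClass.{u} :=
  fun X tX => ∀ C : TopClass.{u}, IsCoreflective C → (∀ Y tY, A Y tY → C Y tY) → C X tX

/-- `SCH A` is the class of all subspaces of members of `CH A`. -/
def SCH (A : TopClass.{u}) : TopClass.{u} :=
  fun X tX => ∃ (Y : Type u) (tY : TopologicalSpace Y) (f : X → Y),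
    CH A Y tY ∧ @Topology.IsEmbedding X Y tX tY f

/-- The class consisting of (the spaces homeomorphic to) a single space `A`. -/
def singleClass (A : Type u) (tA : TopologicalSpace A) : TopClass.{u} :=
  fun Y tY => Nonempty (@Homeomorph Y A tY tA)

/-- A class of topological spaces is hereditary if it is closed under subspaces. -/
def IsHereditary (C : TopClass.{u}) : Prop :=
  ∀ (X : Type u) (tX : TopologicalSpace X), C X tX →
    ∀ (Z : Type u) (tZ : TopologicalSpace Z) (f : Z → X), @Topology.IsEmbedding Z X tZ tX f →
      C Z tZ

/-- The class `FG` of finitely generated (Alexandrov-discrete) topological spaces. -/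
def FGClass : TopClass.{u} := fun X tX => @AlexandrovDiscrete X tX

/-- A filter space: a topological space with precisely one accumulation (non-isolated) point,
namely `a`. -/
def IsFilterSpace (X : Type u) [TopologicalSpace X] (a : X) : Prop :=
  ¬ IsOpen ({a} : Set X) ∧ ∀ x : X, x ≠ a → IsOpen ({x} : Set X)

/-- A filter subspace of a filter space `A` with accumulation point `a`: a subset containing `a`
such that `a` is in the closure of `B \ {a}`. -/
def IsFilterSubspace (A : Type u) [TopologicalSpace A] (a : A) (B : Set A) : Prop :=
  a ∈ B ∧ a ∈ closure (B \ {a})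

/-- The `A`-closure of `M ⊆ X`: points reachable as `f a` for a continuous map `f : B → X`
from a filter subspace `B` of `A` sending `B \ {a}` into `M`. -/
def AClosureStep (A : Type u) [TopologicalSpace A] (a : A) {X : Type u} [TopologicalSpace X]
    (M : Set X) : Set X :=
  {x | ∃ (B : Set A) (hB : IsFilterSubspace A a B) (f : B → X),
    Continuous f ∧ (∀ b : B, (b : A) ≠ a → f b ∈ M) ∧ f ⟨a, hB.1⟩ = x}

/-- The `β`-th iterated `A`-closure `M_β` of `M`, defined by transfinite recursion. -/
noncomputable def AClosureIter (A : Type u) [TopologicalSpace A] (a : A) {X : Type u}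
    [TopologicalSpace X] (M : Set X) (β : Ordinal.{u}) : Set X :=
  Ordinal.limitRecOn β M (fun _ ih => AClosureStep A a ih)
    (fun o _ ih => ⋃ (γ : Ordinal.{u}) (h : γ < o), ih γ h)

/-- The transfinite `A`-closure `M̃ = ⋃_{β ∈ On} M_β` of `M`. -/
noncomputable def ATilde (A : Type u) [TopologicalSpace A] (a : A) {X : Type u}
    [TopologicalSpace X] (M : Set X) : Set X :=
  ⋃ β : Ordinal.{u}, AClosureIter A a M β


section Aux

open Set Topology

variable {A : Type u} [tA : TopologicalSpace A] {a : A}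

/-- `X` is `A`-generated: its topology is final w.r.t. all continuous maps from `A`. -/
def AGen (A : Type u) [tA : TopologicalSpace A] : TopClass.{u} :=
  fun X tX => ∀ U : Set X,
    (∀ f : A → X, @Continuous A X tA tX f → IsOpen (f ⁻¹' U)) → @IsOpen X tX U

lemma univ_filterSubspace (hA : IsFilterSpace A a) : IsFilterSubspace A a Set.univ := by
  refine ⟨trivial, ?_⟩
  by_contra h
  apply hA.1
  have h1 : ({a} : Set A) = (closure (Set.univ \ {a}))ᶜ := by
    apply Set.eq_of_subset_of_subset
    · intro x hx
      rw [Set.mem_singleton_iff] at hx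
      subst hx; exact h
    · intro x hx
      by_contra hxa
      exact hx (subset_closure ⟨trivial, hxa⟩)
  rw [h1]; exact isClosed_closure.isOpen_compl

variable {X : Type u} [tX : TopologicalSpace X]

lemma step_mono {M N : Set X} (h : M ⊆ N) : AClosureStep A a M ⊆ AClosureStep A a N := by
  rintro x ⟨B, hB, f, hf, hM, rfl⟩
  exact ⟨B, hB, f, hf, fun b hb => h (hM b hb), rfl⟩

lemma subset_step (hA : IsFilterSpace A a) (M : Set X) : M ⊆ AClosureStep A a M := by
  intro x hx
  exact ⟨Set.univ, univ_filterSubspace hA, fun _ => x, continuous_const,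
    fun b _ => hx, rfl⟩

lemma step_subset_closure (M : Set X) : AClosureStep A a M ⊆ closure M := by
  rintro x ⟨B, hB, f, hf, hM, rfl⟩
  have h1 : (⟨a, hB.1⟩ : B) ∈ closure {b : B | (b : A) ∈ B \ {a}} := by
    rw [closure_subtype]
    refine closure_mono ?_ hB.2
    intro y hy
    exact ⟨⟨y, hy.1⟩, hy, rfl⟩
  exact map_mem_closure hf h1 (fun b hb => hM b hb.2)

lemma iter_zero (M : Set X) : AClosureIter A a M 0 = M :=
  Ordinal.limitRecOn_zero _ _ _

lemma iter_succ (M : Set X) (β : Ordinal.{u}) :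
    AClosureIter A a M (Order.succ β) = AClosureStep A a (AClosureIter A a M β) :=
  Ordinal.limitRecOn_succ _ _ _ _

lemma iter_limit (M : Set X) (o : Ordinal.{u}) (h : Order.IsSuccLimit o) :
    AClosureIter A a M o = ⋃ (γ : Ordinal.{u}) (_ : γ < o), AClosureIter A a M γ :=
  Ordinal.limitRecOn_limit _ _ _ _ h

lemma iter_mono (hA : IsFilterSpace A a) (M : Set X) :
    ∀ γ β : Ordinal.{u}, β ≤ γ → AClosureIter A a M β ⊆ AClosureIter A a M γ := by
  intro γ
  induction γ using Ordinal.induction with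
  | _ γ ih =>
    intro β hβ
    rcases Ordinal.zero_or_succ_or_isSuccLimit γ with h0 | ⟨δ, rfl⟩ | hl
    · subst h0
      rw [nonpos_iff_eq_zero] at hβ
      subst hβ
      exact subset_rfl
    · rcases eq_or_lt_of_le hβ with rfl | hlt
      · exact subset_rfl
      · have hle : β ≤ δ := Order.lt_succ_iff.mp hlt
        rw [iter_succ]
        exact (ih δ (Order.lt_succ δ) β hle).trans (subset_step hA _)
    · rcases eq_or_lt_of_le hβ with rfl | hlt
      · exact subset_rfl
      · rw [iter_limit M γ hl]
        exact Set.subset_iUnion₂ (s := fun γ' (_ : γ' < γ) => AClosureIter A a M γ') β hlt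

lemma iter_subset_closure (M : Set X) :
    ∀ β : Ordinal.{u}, AClosureIter A a M β ⊆ closure M := by
  intro β
  induction β using Ordinal.induction with
  | _ β ih =>
    rcases Ordinal.zero_or_succ_or_isSuccLimit β with h0 | ⟨δ, rfl⟩ | hl
    · rw [h0, iter_zero]; exact subset_closure
    · rw [iter_succ]
      refine (step_mono (ih δ (Order.lt_succ δ))).trans ?_
      refine (step_subset_closure _).trans ?_
      rw [closure_closure]
    · rw [iter_limit M β hl]
      exact Set.iUnion₂_subset fun γ hγ => ih γ hγ

lemma subset_atilde (M : Set X) : M ⊆ ATilde A a M := fun x hx =>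
  Set.mem_iUnion.2 ⟨0, by rw [iter_zero]; exact hx⟩

lemma atilde_subset_closure (M : Set X) : ATilde A a M ⊆ closure M :=
  Set.iUnion_subset fun β => iter_subset_closure M β

lemma step_atilde (hA : IsFilterSpace A a) (M : Set X) :
    AClosureStep A a (ATilde A a M) ⊆ ATilde A a M := by
  rintro x ⟨B, hB, f, hf, hM, rfl⟩
  have hch : ∀ b : B, ∃ β : Ordinal.{u}, (b : A) ≠ a → f b ∈ AClosureIter A a M β := by
    intro b
    by_cases hb : (b : A) ≠ a
    · obtain ⟨β, hβ⟩ := Set.mem_iUnion.1 (hM b hb)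
      exact ⟨β, fun _ => hβ⟩
    · exact ⟨0, fun h => absurd h hb⟩
  choose g hg using hch
  refine Set.mem_iUnion.2 ⟨Order.succ (⨆ b, g b), ?_⟩
  rw [iter_succ]
  exact ⟨B, hB, f, hf,
    fun b hb => iter_mono hA M _ (g b) (Ordinal.le_iSup g b) (hg b hb), rfl⟩

lemma closed_atilde (hA : IsFilterSpace A a) (hX : AGen A X tX) (M : Set X) :
    IsClosed (ATilde A a M) := by
  rw [← isOpen_compl_iff]
  apply hX
  intro f hf
  rw [Set.preimage_compl, isOpen_compl_iff, ← closure_subset_iff_isClosed]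
  intro y hy
  by_cases hya : y = a
  · rw [hya] at hy ⊢
    by_cases hmem : a ∈ f ⁻¹' ATilde A a M
    · exact hmem
    · have hdiff : f ⁻¹' ATilde A a M \ {a} = f ⁻¹' ATilde A a M := by
        apply Set.diff_singleton_eq_self
        exact hmem
      have hcl : a ∈ closure (f ⁻¹' ATilde A a M \ {a}) := by rw [hdiff]; exact hy
      have hBdiff : (f ⁻¹' ATilde A a M ∪ {a}) \ {a} = f ⁻¹' ATilde A a M \ {a} := by
        rw [Set.union_diff_distrib, Set.diff_self, Set.union_empty]
      refine step_atilde hA M ?_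
      refine ⟨f ⁻¹' ATilde A a M ∪ {a}, ⟨Or.inr rfl, ?_⟩,
        fun b => f b, hf.comp continuous_subtype_val, ?_, rfl⟩
      · rw [hBdiff]; exact hcl
      · rintro ⟨b, hb | hb⟩ hba
        · exact hb
        · exact absurd hb hba
  · have hopen := hA.2 y hya
    rcases mem_closure_iff.1 hy {y} hopen rfl with ⟨z, hz1, hz2⟩
    rw [Set.mem_singleton_iff] at hz1
    subst hz1
    exact hz2

lemma agen_closure_eq (hA : IsFilterSpace A a) (hX : AGen A X tX) (M : Set X) :
    closure M = ATilde A a M :=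
  subset_antisymm (closure_minimal (subset_atilde M) (closed_atilde hA hX M))
    (atilde_subset_closure M)

lemma closure_eq_agen (hA : IsFilterSpace A a)
    (h : ∀ M : Set X, closure M = ATilde A a M) : AGen A X tX := by
  intro U hU
  rw [← isClosed_compl_iff, ← closure_subset_iff_isClosed, h Uᶜ]
  refine Set.iUnion_subset ?_
  intro β
  induction β using Ordinal.induction with
  | _ β ih =>
    rcases Ordinal.zero_or_succ_or_isSuccLimit β with h0 | ⟨δ, rfl⟩ | hl
    · rw [h0, iter_zero]
    · rw [iter_succ]
      rintro x ⟨B, hB, g, hg, hN, rfl⟩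
      by_contra hxU
      rw [Set.notMem_compl_iff] at hxU
      classical
      set f : A → X := fun b => if hb : b ∈ B then g ⟨b, hb⟩ else g ⟨a, hB.1⟩ with hfdef
      have hfa : f a = g ⟨a, hB.1⟩ := by simp [hfdef, hB.1]
      have hfc : Continuous f := by
        rw [continuous_iff_continuousAt]
        intro b
        by_cases hba : b = a
        · rw [hba]
          intro V hV
          have hga : ContinuousAt g ⟨a, hB.1⟩ := hg.continuousAt
          have hV' : V ∈ nhds (g ⟨a, hB.1⟩) := by rwa [hfa] at hV
          have hmem := hga hV'
          rw [nhds_subtype_eq_comap] at hmem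
          obtain ⟨W, hW, hWsub⟩ := Filter.mem_comap.mp hmem
          rw [Filter.mem_map]
          filter_upwards [hW] with c hc
          simp only [Set.mem_preimage]
          by_cases hcB : c ∈ B
          · have : g ⟨c, hcB⟩ ∈ V := hWsub hc
            simpa [hfdef, hcB]
          · have hfc2 : f c = g ⟨a, hB.1⟩ := by simp [hfdef, hcB]
            rw [hfc2, ← hfa]
            exact mem_of_mem_nhds hV
        · have hb := hA.2 b hba
          rw [ContinuousAt, (isOpen_singleton_iff_nhds_eq_pure b).1 hb]
          exact tendsto_pure_nhds f b
      have hopen := hU f hfc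
      have haU : a ∈ f ⁻¹' U := by
        rw [Set.mem_preimage, hfa]; exact hxU
      obtain ⟨z, hz1, hz2⟩ := mem_closure_iff.1 hB.2 _ hopen haU
      have hfz : f z = g ⟨z, hz2.1⟩ := by simp [hfdef, hz2.1]
      have hzN := ih δ (Order.lt_succ δ) (hN ⟨z, hz2.1⟩ hz2.2)
      exact hzN (by rw [← hfz]; exact hz1)
    · rw [iter_limit _ β hl]
      exact Set.iUnion₂_subset fun γ hγ => ih γ hγ

lemma ch_imp_agen (hX : CH (singleClass A tA) X tX) : AGen A X tX := by
  refine hX (AGen A) ⟨?_, ?_⟩ ?_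
  · intro ι Y t hY U hU
    letI : ∀ i, TopologicalSpace (Y i) := t
    rw [isOpen_sigma_iff]
    intro i
    apply hY i
    intro g hg
    exact hU (Sigma.mk i ∘ g) (continuous_sigmaMk.comp hg)
  · intro Y Z tY tZ q hq hY U hU
    rw [← hq.isOpen_preimage]
    apply hY
    intro g hg
    exact hU (q ∘ g) (hq.continuous.comp hg)
  · rintro Y tY ⟨e⟩ U hU
    letI := tY
    have h1 := hU e.symm e.symm.continuous
    have h2 : U = e ⁻¹' (e.symm ⁻¹' U) := by ext z; simp
    rw [h2]
    exact h1.preimage e.continuous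

include a in
lemma agen_imp_ch (hX : AGen A X tX) : CH (singleClass A tA) X tX := by
  intro C hC hCA
  have hCA' : C A tA := hCA A tA ⟨Homeomorph.refl A⟩
  have hsum := hC.1 {f : A → X // Continuous f} (fun _ => A) (fun _ => tA) (fun _ => hCA')
  refine hC.2 _ X _ tX (fun p => (p.1 : A → X) p.2) ?_ hsum
  rw [Topology.isQuotientMap_iff, and_comm, Topology.isCoinducing_iff]
  refine (and_congr_right fun _ => forall_congr' fun s => iff_comm).1 ?_
  constructor
  · intro x
    exact ⟨⟨⟨fun _ => x, continuous_const⟩, a⟩, rfl⟩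
  · intro s
    constructor
    · intro hs
      have hq : Continuous (fun p : (i : {f : A → X // Continuous f}) × A => (p.1 : A → X) p.2) :=
        continuous_sigma fun i => i.2
      exact hs.preimage hq
    · intro hs
      apply hX
      intro f hf
      exact (isOpen_sigma_iff.mp hs) ⟨f, hf⟩

end Aux

/-- For a filter space `A` with accumulation point `a`, a topological space `X`
belongs to `CH {A}` iff for every `M ⊆ X` the closure of `M` equals the transfinite
`A`-closure `M̃`. -/
theorem stmt3 (A : Type u) [tA : TopologicalSpace A] (a : A) (hA : IsFilterSpace A a)
    (X : Type u) [tX : TopologicalSpace X] :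
    CH (singleClass A tA) X tX ↔ ∀ M : Set X, closure M = ATilde A a M := by
  constructor
  · intro h M
    exact agen_closure_eq hA (ch_imp_agen h) M
  · intro h
    exact agen_imp_ch (a := a) (closure_eq_agen hA h)
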